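/- Let f ∈ ℂ[x0,x1,x2,x3,x4] be quasi-homogeneous of degree 26 with respect to the weights (1,2,5,7,13) (family №102, X_26 ⊂ P(1,2,5,7,13)). If f is quasi-smooth, then the coefficient of the monomial x4^2 in f is nonzero and the coefficient of the monomial x2·x3^3 in f is nonzero. -/

import Mathlib

open MvPolynomial

/-- `f` is quasi-homogeneous of degree `d` with respect to the weights `a`:
every monomial occurring in `f` with nonzero coefficient has weighted degree `d`. -/
def IsQuasiHomogeneous (a : Fin 5 → ℕ) (d : ℕ) (f : MvPolynomial (Fin 5) ℂ) : Prop :=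
  ∀ m ∈ f.support, ∑ i, a i * m i = d

/-- `f` is quasi-smooth: at every nonzero point of the affine cone `{f = 0} ⊆ ℂ⁵`,
some partial derivative of `f` does not vanish. -/
def IsQuasiSmooth (f : MvPolynomial (Fin 5) ℂ) : Prop :=
  ∀ x : Fin 5 → ℂ, x ≠ 0 → eval x f = 0 → ∃ i, eval x (pderiv i f) ≠ 0

lemma coeff_pderiv' (i : Fin 5) (m : Fin 5 →₀ ℕ) (f : MvPolynomial (Fin 5) ℂ) :
    coeff m (pderiv i f) = ((m i : ℂ) + 1) * coeff (m + Finsupp.single i 1) f := by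
  induction f using MvPolynomial.induction_on' with
  | add p q hp hq => simp [hp, hq, mul_add]
  | monomial s a =>
    rw [pderiv_monomial, coeff_monomial, coeff_monomial]
    by_cases h2 : s = m + Finsupp.single i 1
    · have hsi : s i = m i + 1 := by
        rw [h2]; simp [Finsupp.single_apply]
      have h1 : (s - Finsupp.single i 1) = m := by
        ext j
        rw [h2]
        simp only [Finsupp.tsub_apply, Finsupp.add_apply, Finsupp.single_apply]
        omega
      rw [if_pos h1, if_pos h2, hsi]
      push_cast; ring
    · rw [if_neg h2, mul_zero]
      by_cases h1 : (s - Finsupp.single i 1) = m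
      · have hsi : s i = 0 := by
          by_contra hne
          apply h2
          ext j
          have := DFunLike.congr_fun h1 j
          simp only [Finsupp.tsub_apply, Finsupp.single_apply] at this
          simp only [Finsupp.add_apply, Finsupp.single_apply]
          by_cases hj : i = j
          · subst hj; simp at this ⊢; omega
          · simp [hj] at this ⊢; omega
        simp [hsi]
      · rw [if_neg h1]

lemma eval_single_pt (j : Fin 5) (k0 : ℕ) (g : MvPolynomial (Fin 5) ℂ)
    (h : ∀ m ∈ g.support, (∀ i, i ≠ j → m i = 0) → m = Finsupp.single j k0) :
    eval (fun i => if i = j then (1:ℂ) else 0) g = coeff (Finsupp.single j k0) g := by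
  rw [eval_eq']
  rw [Finset.sum_congr rfl
    (g := fun m => if m = Finsupp.single j k0 then coeff m g else 0) ?_]
  · rw [Finset.sum_ite_eq' g.support (Finsupp.single j k0) (fun m => coeff m g)]
    split_ifs with h'
    · rfl
    · exact (notMem_support_iff.mp h').symm
  · intro m hm
    beta_reduce
    by_cases hs : ∀ i, i ≠ j → m i = 0
    · have hm0 := h m hm hs
      rw [if_pos hm0, hm0]
      rw [Finset.prod_eq_one, mul_one]
      intro i _
      by_cases hij : i = j
      · simp [hij, Finsupp.single_apply]
      · simp [hij, Finsupp.single_apply, Ne.symm hij]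
    · push_neg at hs
      obtain ⟨i, hij, hi⟩ := hs
      rw [if_neg, Finset.prod_eq_zero (Finset.mem_univ i), mul_zero]
      · simp [hij, zero_pow hi]
      · intro hc
        apply hi
        rw [hc]
        simp [Finsupp.single_apply, Ne.symm hij]

lemma pderiv_mem {i : Fin 5} {m : Fin 5 →₀ ℕ} {f : MvPolynomial (Fin 5) ℂ}
    (h : m ∈ (pderiv i f).support) : m + Finsupp.single i 1 ∈ f.support := by
  rw [mem_support_iff] at h ⊢
  rw [coeff_pderiv'] at h
  intro h0
  exact h (by rw [h0, mul_zero])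

lemma wt {f : MvPolynomial (Fin 5) ℂ} (hqh : IsQuasiHomogeneous ![1,2,5,7,13] 26 f)
    {m : Fin 5 →₀ ℕ} (hm : m ∈ f.support) :
    m 0 + 2 * m 1 + 5 * m 2 + 7 * m 3 + 13 * m 4 = 26 := by
  have := hqh m hm
  simpa [Fin.sum_univ_five] using this

theorem stmt_2 (f : MvPolynomial (Fin 5) ℂ)
    (hqh : IsQuasiHomogeneous ![1,2,5,7,13] 26 f)
    (hqs : IsQuasiSmooth f) :
    f.coeff (Finsupp.single (4 : Fin 5) 2) ≠ 0 ∧ f.coeff (Finsupp.single (2 : Fin 5) 1 + Finsupp.single (3 : Fin 5) 3) ≠ 0 := by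
  constructor
  · intro hc
    have hx : (fun i : Fin 5 => if i = 4 then (1:ℂ) else 0) ≠ 0 := by
      intro h
      have := congrFun h 4
      simp at this
    have hev : eval (fun i : Fin 5 => if i = 4 then (1:ℂ) else 0) f = 0 := by
      rw [eval_single_pt 4 2 f ?_]
      · exact hc
      intro m hm hs
      have hw := wt hqh hm
      have h0 := hs 0 (by decide); have h1 := hs 1 (by decide)
      have h2 := hs 2 (by decide); have h3 := hs 3 (by decide)
      have h4 : m 4 = 2 := by omega
      ext j
      fin_cases j <;> simp [Finsupp.single_apply, h0, h1, h2, h3, h4]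
    obtain ⟨i, hi⟩ := hqs _ hx hev
    have hi5 : i = 0 ∨ i = 1 ∨ i = 2 ∨ i = 3 ∨ i = 4 := by omega
    apply hi
    have key : ∀ m ∈ (pderiv i f).support, (∀ l, l ≠ (4:Fin 5) → m l = 0) →
        (m 0 + Finsupp.single i 1 0) + 2 * (m 1 + Finsupp.single i 1 1)
          + 5 * (m 2 + Finsupp.single i 1 2) + 7 * (m 3 + Finsupp.single i 1 3)
          + 13 * (m 4 + Finsupp.single i 1 4) = 26 := by
      intro m hm _
      have := wt hqh (pderiv_mem hm)
      simpa [Finsupp.add_apply] using this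
    rcases hi5 with rfl|rfl|rfl|rfl|rfl
    · rw [eval_single_pt 4 0 (pderiv 0 f) ?_]
      · rw [show (Finsupp.single (4:Fin 5) 0) = 0 from Finsupp.single_zero 4,
          coeff_pderiv']
        have : Finsupp.single (0:Fin 5) 1 ∉ f.support := by
          intro hmem
          have := wt hqh hmem
          simp [Finsupp.single_apply] at this
        rw [notMem_support_iff.mp (by simpa using this)]
        simp
      · intro m hm hs
        exfalso
        have := key m hm hs
        have h0 := hs 0 (by decide); have h1 := hs 1 (by decide)
        have h2 := hs 2 (by decide); have h3 := hs 3 (by decide)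
        simp [Finsupp.single_apply, h0, h1, h2, h3] at this
        omega
    · rw [eval_single_pt 4 0 (pderiv 1 f) ?_]
      · rw [show (Finsupp.single (4:Fin 5) 0) = 0 from Finsupp.single_zero 4,
          coeff_pderiv']
        have : Finsupp.single (1:Fin 5) 1 ∉ f.support := by
          intro hmem
          have := wt hqh hmem
          simp [Finsupp.single_apply] at this
        rw [notMem_support_iff.mp (by simpa using this)]
        simp
      · intro m hm hs
        exfalso
        have := key m hm hs
        have h0 := hs 0 (by decide); have h1 := hs 1 (by decide)
        have h2 := hs 2 (by decide); have h3 := hs 3 (by decide)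
        simp [Finsupp.single_apply, h0, h1, h2, h3] at this
        omega
    · rw [eval_single_pt 4 0 (pderiv 2 f) ?_]
      · rw [show (Finsupp.single (4:Fin 5) 0) = 0 from Finsupp.single_zero 4,
          coeff_pderiv']
        have : Finsupp.single (2:Fin 5) 1 ∉ f.support := by
          intro hmem
          have := wt hqh hmem
          simp [Finsupp.single_apply] at this
        rw [notMem_support_iff.mp (by simpa using this)]
        simp
      · intro m hm hs
        exfalso
        have := key m hm hs
        have h0 := hs 0 (by decide); have h1 := hs 1 (by decide)
        have h2 := hs 2 (by decide); have h3 := hs 3 (by decide)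
        simp [Finsupp.single_apply, h0, h1, h2, h3] at this
        omega
    · rw [eval_single_pt 4 0 (pderiv 3 f) ?_]
      · rw [show (Finsupp.single (4:Fin 5) 0) = 0 from Finsupp.single_zero 4,
          coeff_pderiv']
        have : Finsupp.single (3:Fin 5) 1 ∉ f.support := by
          intro hmem
          have := wt hqh hmem
          simp [Finsupp.single_apply] at this
        rw [notMem_support_iff.mp (by simpa using this)]
        simp
      · intro m hm hs
        exfalso
        have := key m hm hs
        have h0 := hs 0 (by decide); have h1 := hs 1 (by decide)
        have h2 := hs 2 (by decide); have h3 := hs 3 (by decide)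
        simp [Finsupp.single_apply, h0, h1, h2, h3] at this
        omega
    · rw [eval_single_pt 4 1 (pderiv 4 f) ?_]
      · rw [coeff_pderiv',
          show Finsupp.single (4:Fin 5) 1 + Finsupp.single (4:Fin 5) 1
            = Finsupp.single (4:Fin 5) 2 from (Finsupp.single_add 4 1 1).symm,
          hc, mul_zero]
      · intro m hm hs
        have := key m hm hs
        have h0 := hs 0 (by decide); have h1 := hs 1 (by decide)
        have h2 := hs 2 (by decide); have h3 := hs 3 (by decide)
        simp [Finsupp.single_apply, h0, h1, h2, h3] at this
        have h4 : m 4 = 1 := by omega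
        ext j
        fin_cases j <;> simp [Finsupp.single_apply, h0, h1, h2, h3, h4]
  · intro hc
    have hx : (fun i : Fin 5 => if i = 3 then (1:ℂ) else 0) ≠ 0 := by
      intro h
      have := congrFun h 3
      simp at this
    have hev : eval (fun i : Fin 5 => if i = 3 then (1:ℂ) else 0) f = 0 := by
      rw [eval_single_pt 3 0 f ?_]
      · have : Finsupp.single (3:Fin 5) 0 ∉ f.support := by
          intro hmem
          have := wt hqh hmem
          simp [Finsupp.single_apply] at this
        exact notMem_support_iff.mp this
      · intro m hm hs
        exfalso
        have hw := wt hqh hm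
        have h0 := hs 0 (by decide); have h1 := hs 1 (by decide)
        have h2 := hs 2 (by decide); have h4 := hs 4 (by decide)
        omega
    obtain ⟨i, hi⟩ := hqs _ hx hev
    have hi5 : i = 0 ∨ i = 1 ∨ i = 2 ∨ i = 3 ∨ i = 4 := by omega
    apply hi
    have key : ∀ m ∈ (pderiv i f).support, (∀ l, l ≠ (3:Fin 5) → m l = 0) →
        (m 0 + Finsupp.single i 1 0) + 2 * (m 1 + Finsupp.single i 1 1)
          + 5 * (m 2 + Finsupp.single i 1 2) + 7 * (m 3 + Finsupp.single i 1 3)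
          + 13 * (m 4 + Finsupp.single i 1 4) = 26 := by
      intro m hm _
      have := wt hqh (pderiv_mem hm)
      simpa [Finsupp.add_apply] using this
    rcases hi5 with rfl|rfl|rfl|rfl|rfl
    · rw [eval_single_pt 3 0 (pderiv 0 f) ?_]
      · rw [show (Finsupp.single ((3:Fin 5)) 0) = 0 from Finsupp.single_zero 3,
          coeff_pderiv']
        have : Finsupp.single (0:Fin 5) 1 ∉ f.support := by
          intro hmem
          have := wt hqh hmem
          simp [Finsupp.single_apply] at this
        rw [notMem_support_iff.mp (by simpa using this)]
        simp
      · intro m hm hs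
        exfalso
        have := key m hm hs
        have h0 := hs 0 (by decide); have h1 := hs 1 (by decide); have h2 := hs 2 (by decide); have h4 := hs 4 (by decide); 
        simp [Finsupp.single_apply, h0, h1, h2, h4] at this
        omega
    · rw [eval_single_pt 3 0 (pderiv 1 f) ?_]
      · rw [show (Finsupp.single ((3:Fin 5)) 0) = 0 from Finsupp.single_zero 3,
          coeff_pderiv']
        have : Finsupp.single (1:Fin 5) 1 ∉ f.support := by
          intro hmem
          have := wt hqh hmem
          simp [Finsupp.single_apply] at this
        rw [notMem_support_iff.mp (by simpa using this)]
        simp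
      · intro m hm hs
        exfalso
        have := key m hm hs
        have h0 := hs 0 (by decide); have h1 := hs 1 (by decide); have h2 := hs 2 (by decide); have h4 := hs 4 (by decide); 
        simp [Finsupp.single_apply, h0, h1, h2, h4] at this
        omega
    · rw [eval_single_pt 3 3 (pderiv 2 f) ?_]
      · rw [coeff_pderiv',
          show Finsupp.single ((3:Fin 5)) 3 + Finsupp.single ((2:Fin 5)) 1
            = Finsupp.single ((2:Fin 5)) 1 + Finsupp.single ((3:Fin 5)) 3 from add_comm _ _,
          hc, mul_zero]
      · intro m hm hs
        have := key m hm hs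
        have h0 := hs 0 (by decide); have h1 := hs 1 (by decide)
        have h2 := hs 2 (by decide); have h4 := hs 4 (by decide)
        simp [Finsupp.single_apply, h0, h1, h2, h4] at this
        have h3 : m 3 = 3 := by omega
        ext j
        fin_cases j <;> simp [Finsupp.single_apply, h0, h1, h2, h3, h4]
    · rw [eval_single_pt 3 0 (pderiv 3 f) ?_]
      · rw [show (Finsupp.single ((3:Fin 5)) 0) = 0 from Finsupp.single_zero 3,
          coeff_pderiv']
        have : Finsupp.single (3:Fin 5) 1 ∉ f.support := by
          intro hmem
          have := wt hqh hmem
          simp [Finsupp.single_apply] at this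
        rw [notMem_support_iff.mp (by simpa using this)]
        simp
      · intro m hm hs
        exfalso
        have := key m hm hs
        have h0 := hs 0 (by decide); have h1 := hs 1 (by decide); have h2 := hs 2 (by decide); have h4 := hs 4 (by decide); 
        simp [Finsupp.single_apply, h0, h1, h2, h4] at this
        omega
    · rw [eval_single_pt 3 0 (pderiv 4 f) ?_]
      · rw [show (Finsupp.single ((3:Fin 5)) 0) = 0 from Finsupp.single_zero 3,
          coeff_pderiv']
        have : Finsupp.single (4:Fin 5) 1 ∉ f.support := by
          intro hmem
          have := wt hqh hmem
          simp [Finsupp.single_apply] at this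
        rw [notMem_support_iff.mp (by simpa using this)]
        simp
      · intro m hm hs
        exfalso
        have := key m hm hs
        have h0 := hs 0 (by decide); have h1 := hs 1 (by decide); have h2 := hs 2 (by decide); have h4 := hs 4 (by decide); 
        simp [Finsupp.single_apply, h0, h1, h2, h4] at this
        omega
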